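/- One-variable central limit bound: for v ∈ ℓ²₃(L) and J ∈ (1/2)ℕ₀, the fluctuation operator F_J(v) = √(2/J) Σ_x [v_x·S_x − ω(v_x·S_x)] satisfies |ω(e^{iF_J(v)}) − e^{−(1/2)|ṽ|₂²}| ≤ J^{−1/2} exp(√2 |v|₂ + √2 exp(√2 |v|₂)), where ṽ_x is the orthogonal projection of v_x onto the plane perpendicular to u_x. -/

import Mathlib

set_option maxHeartbeats 2000000

open scoped ComplexOrder

/-- Euclidean norm on `ℝ³`. -/
noncomputable def norm3 (a : Fin 3 → ℝ) : ℝ := Real.sqrt (∑ i, a i ^ 2)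

/-- Euclidean inner product on `ℝ³`. -/
def dot3 (a b : Fin 3 → ℝ) : ℝ := ∑ i, a i * b i

/-- Projection of `v` onto the plane orthogonal to the unit vector `u`. -/
def tilde3 (u v : Fin 3 → ℝ) : Fin 3 → ℝ := v - dot3 v u • u

variable {L : Type*} {H : Type*} [NormedAddCommGroup H] [InnerProductSpace ℂ H]
  [CompleteSpace H]

/-- The operator `v·S = v¹S¹ + v²S² + v³S³`. -/
noncomputable def sdotC (a : Fin 3 → ℝ) (S : Fin 3 → H →L[ℂ] H) : H →L[ℂ] H :=
  ∑ i, (a i : ℂ) • S i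

/-- The spin fluctuation operator `F_J(v) = √(2/J) Σ_x [v_x·S_x − ω(v_x·S_x)]`,
where `ω(v_x·S_x) = J v_x·u_x` in the product coherent state with directions `u_x`. -/
noncomputable def flucOp (J : ℝ) (S : L → Fin 3 → H →L[ℂ] H) (u v : L → Fin 3 → ℝ) :
    H →L[ℂ] H :=
  (Real.sqrt (2 / J) : ℂ) •
    ∑' x, (sdotC (v x) (S x) - ((J * dot3 (v x) (u x) : ℝ) : ℂ) • (1 : H →L[ℂ] H))

/-! ### Auxiliary scalar lemmas -/

lemma aux_csq_le (c : ℝ) (hc : |c| ≤ 1) : c^2 ≤ 1 := by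
  rw [← sq_abs]; nlinarith [abs_nonneg c]

lemma aux_abs_cs (c t : ℝ) (hc : |c| ≤ 1) :
    ‖↑(Real.cos t) + Complex.I * ↑c * ↑(Real.sin t)‖ ≤ 1 := by
  have h : (↑(Real.cos t) + Complex.I * ↑c * ↑(Real.sin t) : ℂ)
      = ↑(Real.cos t) + ↑(c * Real.sin t) * Complex.I := by push_cast; ring
  rw [h, Complex.norm_add_mul_I]
  have h1 : (c * Real.sin t)^2 ≤ Real.sin t ^ 2 := by
    rw [mul_pow]
    nlinarith [sq_nonneg (Real.sin t), aux_csq_le c hc]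
  have h2 := Real.sin_sq_add_cos_sq t
  have h3 : Real.cos t ^ 2 + (c * Real.sin t) ^ 2 ≤ 1 := by nlinarith
  calc Real.sqrt (Real.cos t ^2 + (c*Real.sin t)^2) ≤ Real.sqrt 1 := Real.sqrt_le_sqrt h3
  _ = 1 := Real.sqrt_one

lemma aux_core1 (c t : ℝ) (hc : |c| ≤ 1) (ht0 : 0 ≤ t) (ht1 : t ≤ 1) :
    ‖Complex.exp (-(Complex.I * ↑c * ↑t)) *
        (↑(Real.cos t) + Complex.I * ↑c * ↑(Real.sin t))
      - ↑(Real.exp (-((1 - c^2) * t^2 / 2)))‖ ≤ 2 * t^3 := by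
  have hc2 := aux_csq_le c hc
  have hc1 := abs_le.mp hc
  have ht3 : 0 ≤ t^3 := pow_nonneg ht0 3
  have ht4 : 0 ≤ t^4 := pow_nonneg ht0 4
  have ht43 : t^4 ≤ t^3 := by nlinarith
  set x : ℂ := -(Complex.I * ↑c * ↑t) with hx
  set z : ℂ := ↑(Real.cos t) + Complex.I * ↑c * ↑(Real.sin t) with hz
  have habsx' : ‖x‖ ≤ t := by
    rw [hx]
    simp only [norm_neg, norm_mul, Complex.norm_I, Complex.norm_real, Real.norm_eq_abs, one_mul]
    rw [abs_of_nonneg ht0]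
    nlinarith [abs_nonneg c]
  have habsx : ‖x‖ ≤ 1 := habsx'.trans ht1
  have hP := Complex.exp_bound habsx (n := 3) (by norm_num)
  have hsum3 : ∑ m ∈ Finset.range 3, x ^ m / m.factorial = 1 + x + x^2/2 := by
    rw [Finset.sum_range_succ, Finset.sum_range_succ, Finset.sum_range_succ]
    norm_num
  rw [hsum3] at hP
  norm_num [Nat.factorial] at hP
  have hP' : ‖Complex.exp x - (1 + x + x^2/2)‖ ≤ 2/9 * t^3 := by
    refine hP.trans ?_
    have h3 : ‖x‖ ^ 3 ≤ t ^ 3 := pow_le_pow_left₀ (norm_nonneg x) habsx' 3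
    nlinarith [norm_nonneg x]
  have ht : |t| ≤ 1 := by rw [abs_of_nonneg ht0]; exact ht1
  have hcos := Real.cos_bound ht
  have hsin := Real.sin_bound ht
  rw [abs_of_nonneg ht0] at hcos hsin
  have hsin' : |Real.sin t - t| ≤ t^3/6 + t^4 * (5/96) := by
    have h := abs_le.mp hsin
    have h54 : t^5 ≤ t^4 := pow_le_pow_of_le_one ht0 ht1 (by norm_num)
    exact abs_le.mpr ⟨by linarith [h.1], by linarith [h.2]⟩
  set Q : ℂ := 1 + Complex.I * ↑c * ↑t - (↑t)^2/2 with hQ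
  have hzQ : ‖z - Q‖ ≤ t^4 * (5/96) + (t^3/6 + t^4 * (5/96)) := by
    have he : z - Q = Complex.ofReal (Real.cos t - (1 - t^2/2))
        + Complex.I * ↑c * Complex.ofReal (Real.sin t - t) := by
      rw [hz, hQ]; push_cast; ring
    rw [he]
    refine (norm_add_le _ _).trans ?_
    simp only [norm_mul, Complex.norm_I, Complex.norm_real, Real.norm_eq_abs, one_mul]
    have h5 : |c| * |Real.sin t - t| ≤ 1 * (t^3/6 + t^4*(5/96)) :=
      mul_le_mul hc hsin' (abs_nonneg _) zero_le_one
    rw [one_mul] at h5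
    linarith
  have hQabs : ‖Q‖ ≤ 5/2 := by
    rw [hQ]
    refine (norm_sub_le _ _).trans ?_
    refine le_trans (add_le_add_left (norm_add_le _ _) _) ?_
    simp only [norm_one, norm_mul, Complex.norm_I, Complex.norm_real, Real.norm_eq_abs, one_mul, norm_div,
      norm_pow, Complex.norm_two, Complex.norm_ofNat]
    rw [abs_of_nonneg ht0]
    nlinarith [abs_nonneg c]
  have hzabs : ‖z‖ ≤ 1 := aux_abs_cs c t hc
  have hexparg : ‖Complex.exp x‖ = 1 := by
    rw [Complex.norm_exp]
    have hre : x.re = 0 := by rw [hx]; simp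
    rw [hre, Real.exp_zero]
  set P : ℂ := 1 + x + x^2/2 with hP2
  have h1 : ‖Complex.exp x * z - P * Q‖ ≤
      (t^4 * (5/96) + (t^3/6 + t^4 * (5/96))) + 5/2 * (2/9 * t^3) := by
    have he : Complex.exp x * z - P * Q = Complex.exp x * (z - Q) + (Complex.exp x - P) * Q := by
      ring
    rw [he]
    refine (norm_add_le _ _).trans ?_
    simp only [norm_mul]
    rw [hexparg, one_mul]
    have h2 : ‖Complex.exp x - P‖ * ‖Q‖ ≤ (2/9*t^3) * (5/2) :=
      mul_le_mul hP' hQabs (norm_nonneg _) (by positivity)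
    linarith [hzQ]
  have hPexp : P = 1 - Complex.I * ↑c * ↑t - (c:ℂ)^2 * (t:ℂ)^2/2 := by
    rw [hP2, hx]
    linear_combination ((c:ℂ)^2*(t:ℂ)^2/2) * Complex.I_sq
  have hPQ : P * Q = (1 - (1 - (c:ℂ)^2) * (t:ℂ)^2/2)
      + Complex.I * c * (1 - (c:ℂ)^2) * (t:ℂ)^3/2 + (c:ℂ)^2 * (t:ℂ)^4/4 := by
    rw [hPexp, hQ]
    linear_combination (-(c:ℂ)^2*(t:ℂ)^2) * Complex.I_sq
  set L' : ℂ := 1 - (1 - (c:ℂ)^2) * (t:ℂ)^2/2 with hL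
  have h2 : ‖P * Q - L'‖ ≤ t^3/2 + t^4/4 := by
    have he : P * Q - L'
        = Complex.I * Complex.ofReal (c * (1 - c^2) * t^3/2) + Complex.ofReal (c^2 * t^4/4) := by
      rw [hPQ, hL]; push_cast; ring
    rw [he]
    refine (norm_add_le _ _).trans ?_
    simp only [norm_mul, Complex.norm_I, Complex.norm_real, Real.norm_eq_abs, one_mul]
    have hcfac : |c * (1 - c^2)| ≤ 1 := by
      rw [abs_mul, abs_of_nonneg (show (0:ℝ) ≤ 1 - c^2 by nlinarith)]
      nlinarith [abs_nonneg c]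
    have e1 : |c * (1 - c^2) * t^3/2| ≤ t^3/2 := by
      rw [abs_div, abs_mul, abs_of_nonneg ht3, (by norm_num : |(2:ℝ)| = 2)]
      have := mul_le_mul_of_nonneg_right hcfac ht3
      linarith
    have e2 : |c^2 * t^4/4| ≤ t^4/4 := by
      rw [abs_div, abs_mul, abs_of_nonneg ht4, abs_of_nonneg (sq_nonneg c),
        (by norm_num : |(4:ℝ)| = 4)]
      nlinarith [sq_nonneg c]
    linarith
  have h3 : ‖L' - ↑(Real.exp (-((1 - c^2) * t^2 / 2)))‖ ≤ 3 * t^4/16 := by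
    have he : L' - ↑(Real.exp (-((1 - c^2) * t^2 / 2)))
        = Complex.ofReal ((1 + -((1 - c^2) * t^2 / 2)) - Real.exp (-((1 - c^2) * t^2 / 2))) := by
      rw [hL]; push_cast; ring
    rw [he, Complex.norm_real, Real.norm_eq_abs]
    set s : ℝ := (1 - c^2) * t^2 / 2 with hs
    have hs0 : 0 ≤ s := by rw [hs]; nlinarith [sq_nonneg t]
    have hs1 : s ≤ 1 := by rw [hs]; nlinarith [sq_nonneg t, sq_nonneg c]
    have hb := Real.exp_bound (x := -s) (by rw [abs_neg, abs_of_nonneg hs0]; exact hs1)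
      (n := 2) (by norm_num)
    have hsum2 : ∑ m ∈ Finset.range 2, (-s) ^ m / m.factorial = 1 + (-s) := by
      rw [Finset.sum_range_succ, Finset.sum_range_succ]
      norm_num
    rw [hsum2] at hb
    norm_num [Nat.factorial] at hb
    rw [abs_sub_comm]
    refine hb.trans ?_
    have hss : s^2 ≤ (t^2/2)^2 := by
      have : s ≤ t^2/2 := by rw [hs]; nlinarith [sq_nonneg t, sq_nonneg c]
      nlinarith
    nlinarith
  have final : ‖Complex.exp x * z - ↑(Real.exp (-((1 - c^2) * t^2 / 2)))‖ ≤
      (t^4 * (5/96) + (t^3/6 + t^4 * (5/96))) + 5/2 * (2/9 * t^3) + (t^3/2 + t^4/4) + 3*t^4/16 := by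
    have he : Complex.exp x * z - ↑(Real.exp (-((1 - c^2) * t^2 / 2)))
        = (Complex.exp x * z - P * Q) + (P * Q - L')
          + (L' - ↑(Real.exp (-((1 - c^2) * t^2 / 2)))) := by
      ring
    rw [he]
    refine (norm_add_le _ _).trans ?_
    refine le_trans (add_le_add_left (norm_add_le _ _) _) ?_
    linarith
  refine final.trans ?_
  linarith

lemma aux_pow_diff (a b : ℂ) (ha : ‖a‖ ≤ 1) (hb : ‖b‖ ≤ 1) (m : ℕ) :
    ‖a^m - b^m‖ ≤ m * ‖a - b‖ := by
  induction m with
  | zero => simp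
  | succ k ih =>
    have he : a^(k+1) - b^(k+1) = a^k * (a - b) + (a^k - b^k) * b := by ring
    rw [he]
    refine (norm_add_le _ _).trans ?_
    rw [norm_mul, norm_mul, norm_pow]
    have h1 : ‖a‖ ^ k * ‖a - b‖ ≤ 1 * ‖a - b‖ :=
      mul_le_mul_of_nonneg_right (pow_le_one₀ (norm_nonneg a) ha) (norm_nonneg _)
    have h2 : ‖a^k - b^k‖ * ‖b‖ ≤ (k * ‖a - b‖) * 1 :=
      mul_le_mul ih hb (norm_nonneg _) (by positivity)
    push_cast
    nlinarith [norm_nonneg (a - b)]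

lemma aux_site_n (mJ : ℕ) (hmJ : 0 < mJ) (J n c : ℝ) (hJ : 2 * J = mJ) (hn : 0 ≤ n)
    (hc : |c| ≤ 1) :
    ‖(Complex.exp (-(Complex.I * ↑c * ↑(n / Real.sqrt (2*J)))) *
        (↑(Real.cos (n / Real.sqrt (2*J)))
          + Complex.I * ↑c * ↑(Real.sin (n / Real.sqrt (2*J)))))^mJ
      - (↑(Real.exp (-((1 - c^2) * n^2 / 2))) : ℂ)‖ ≤ Real.sqrt 2 * n^3 / Real.sqrt J := by
  have hm1 : (1:ℝ) ≤ mJ := by exact_mod_cast hmJ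
  have hJpos : 0 < J := by nlinarith
  have hs : 0 < Real.sqrt (2*J) := Real.sqrt_pos.mpr (by nlinarith)
  have hs2 : Real.sqrt (2*J) ^ 2 = 2*J := Real.sq_sqrt (by nlinarith)
  have hsJ : 0 < Real.sqrt J := Real.sqrt_pos.mpr hJpos
  have hsJ2 : Real.sqrt J ^ 2 = J := Real.sq_sqrt hJpos.le
  have hs22 : Real.sqrt 2 ^ 2 = 2 := Real.sq_sqrt (by norm_num)
  have hs2pos : (0:ℝ) < Real.sqrt 2 := Real.sqrt_pos.mpr (by norm_num)
  have hsplit : Real.sqrt (2*J) = Real.sqrt 2 * Real.sqrt J := Real.sqrt_mul (by norm_num) J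
  set θ : ℝ := n / Real.sqrt (2*J) with hθdef
  have hθ0 : 0 ≤ θ := div_nonneg hn hs.le
  have hbpow : (↑(Real.exp (-((1 - c^2) * n^2 / 2))) : ℂ)
      = (↑(Real.exp (-((1 - c^2) * θ^2 / 2))) : ℂ)^mJ := by
    rw [← Complex.ofReal_pow, ← Real.exp_nat_mul]
    congr 1
    have hθ2 : θ^2 = n^2 / (2*J) := by
      rw [hθdef, div_pow, hs2]
    rw [hθ2, ← hJ]
    field_simp
  rw [hbpow]
  set a : ℂ := Complex.exp (-(Complex.I * ↑c * ↑θ)) *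
      (↑(Real.cos θ) + Complex.I * ↑c * ↑(Real.sin θ)) with ha
  set b : ℂ := (↑(Real.exp (-((1 - c^2) * θ^2 / 2))) : ℂ) with hb
  have haabs : ‖a‖ ≤ 1 := by
    rw [ha, norm_mul]
    have h1 : ‖Complex.exp (-(Complex.I * ↑c * ↑θ))‖ = 1 := by
      rw [Complex.norm_exp]
      have : (-(Complex.I * ↑c * ↑θ)).re = 0 := by simp
      rw [this, Real.exp_zero]
    rw [h1, one_mul]
    exact aux_abs_cs c θ hc
  have hbabs : ‖b‖ ≤ 1 := by
    rw [hb, Complex.norm_real, Real.norm_eq_abs, abs_of_nonneg (Real.exp_nonneg _)]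
    rw [Real.exp_le_one_iff]
    nlinarith [sq_nonneg θ, aux_csq_le c hc]
  have hcrude : ‖a^mJ - b^mJ‖ ≤ 2 := by
    refine (norm_sub_le _ _).trans ?_
    rw [norm_pow, norm_pow]
    have := pow_le_one₀ (norm_nonneg a) haabs (n := mJ)
    have := pow_le_one₀ (norm_nonneg b) hbabs (n := mJ)
    linarith
  rcases le_or_gt θ 1 with hθ1 | hθ1
  · have hcore := aux_core1 c θ hc hθ0 hθ1
    have h := (aux_pow_diff a b haabs hbabs mJ).trans
      (mul_le_mul_of_nonneg_left hcore (by positivity : (0:ℝ) ≤ (mJ:ℝ)))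
    refine h.trans ?_
    have h2J : Real.sqrt (2*J)^3 = 2 * Real.sqrt 2 * (J * Real.sqrt J) := by
      rw [hsplit]
      have h' : (Real.sqrt 2 * Real.sqrt J)^3
          = Real.sqrt 2 ^2 * Real.sqrt 2 * (Real.sqrt J ^2 * Real.sqrt J) := by ring
      rw [h', hs22, hsJ2]
      try ring
    have hθ3 : θ^3 = n^3 / (2 * Real.sqrt 2 * (J * Real.sqrt J)) := by
      rw [hθdef, div_pow, h2J]
    have hmJR : (mJ:ℝ) = 2*J := hJ.symm
    rw [hmJR, hθ3]
    have e1 : 2*J*(2*(n^3/(2*Real.sqrt 2*(J*Real.sqrt J))))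
        = (4*J*n^3)/(2*Real.sqrt 2*(J*Real.sqrt J)) := by ring
    have e2 : (4*J*n^3)/(2*Real.sqrt 2*(J*Real.sqrt J)) = Real.sqrt 2 * n^3 / Real.sqrt J := by
      rw [div_eq_div_iff (by positivity) hsJ.ne']
      linear_combination (-2*J*n^3*Real.sqrt J)*hs22
    calc (2*J) * (2 * (n^3/(2*Real.sqrt 2*(J*Real.sqrt J))))
        = (4*J*n^3)/(2*Real.sqrt 2*(J*Real.sqrt J)) := e1
      _ = Real.sqrt 2 * n^3 / Real.sqrt J := e2
      _ ≤ Real.sqrt 2 * n^3 / Real.sqrt J := le_refl _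
  · refine hcrude.trans ?_
    have hn3 : Real.sqrt (2*J)^3 ≤ n^3 := by
      have hsn : Real.sqrt (2*J) ≤ n := by
        rw [hθdef] at hθ1
        calc Real.sqrt (2*J) = Real.sqrt (2*J) * 1 := by ring
        _ ≤ Real.sqrt (2*J) * θ := by nlinarith
        _ = n := by rw [hθdef]; field_simp
      exact pow_le_pow_left₀ hs.le hsn 3
    have h2J : Real.sqrt (2*J)^3 = 2 * Real.sqrt 2 * (J * Real.sqrt J) := by
      rw [hsplit]
      have h' : (Real.sqrt 2 * Real.sqrt J)^3
          = Real.sqrt 2 ^2 * Real.sqrt 2 * (Real.sqrt J ^2 * Real.sqrt J) := by ring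
      rw [h', hs22, hsJ2]
      try ring
    rw [h2J] at hn3
    rw [le_div_iff₀ hsJ]
    have key : Real.sqrt 2 * (2*Real.sqrt 2*(J*Real.sqrt J)) = 4*J*Real.sqrt J := by
      linear_combination (2*J*Real.sqrt J)*hs22
    have h5 : Real.sqrt 2 * (2*Real.sqrt 2*(J*Real.sqrt J)) ≤ Real.sqrt 2 * n^3 :=
      mul_le_mul_of_nonneg_left hn3 hs2pos.le
    rw [key] at h5
    nlinarith [hsJ, hJpos]

lemma aux_prod_diff {ι : Type*} (s : Finset ι) (f g : ι → ℂ)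
    (hf : ∀ i ∈ s, ‖f i‖ ≤ 1) (hg : ∀ i ∈ s, ‖g i‖ ≤ 1) :
    ‖∏ i ∈ s, f i - ∏ i ∈ s, g i‖ ≤ ∑ i ∈ s, ‖f i - g i‖ := by
  classical
  induction s using Finset.induction_on with
  | empty => simp
  | insert a s hx ih =>
    rw [Finset.prod_insert hx, Finset.prod_insert hx, Finset.sum_insert hx]
    have he : f a * ∏ i ∈ s, f i - g a * ∏ i ∈ s, g i
        = f a * (∏ i ∈ s, f i - ∏ i ∈ s, g i) + (f a - g a) * ∏ i ∈ s, g i := by ring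
    rw [he]
    refine (norm_add_le _ _).trans ?_
    rw [norm_mul, norm_mul]
    have hfa : ‖f a‖ ≤ 1 := hf a (Finset.mem_insert_self a s)
    have hgp : ‖∏ i ∈ s, g i‖ ≤ 1 := by
      rw [norm_prod]
      exact Finset.prod_le_one (fun i _ => norm_nonneg _)
        (fun i hi => hg i (Finset.mem_insert_of_mem hi))
    have ih' := ih (fun i hi => hf i (Finset.mem_insert_of_mem hi))
      (fun i hi => hg i (Finset.mem_insert_of_mem hi))
    have h1 : ‖f a‖ * ‖∏ i ∈ s, f i - ∏ i ∈ s, g i‖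
        ≤ 1 * (∑ i ∈ s, ‖f i - g i‖) :=
      mul_le_mul hfa ih' (norm_nonneg _) zero_le_one
    have h2 : ‖f a - g a‖ * ‖∏ i ∈ s, g i‖
        ≤ ‖f a - g a‖ * 1 :=
      mul_le_mul_of_nonneg_left hgp (norm_nonneg _)
    linarith

lemma aux_cube_bound (V : ℝ) (hV : 0 ≤ V) :
    Real.sqrt 2 * V^3 ≤ Real.exp (Real.sqrt 2 * V + Real.sqrt 2 * Real.exp (Real.sqrt 2 * V)) := by
  have hs22 : Real.sqrt 2 ^ 2 = 2 := Real.sq_sqrt (by norm_num)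
  have hs2pos : (0:ℝ) < Real.sqrt 2 := Real.sqrt_pos.mpr (by norm_num)
  have hs21 : (1:ℝ) ≤ Real.sqrt 2 := by nlinarith
  set K := Real.sqrt 2 * V with hK
  have hK0 : 0 ≤ K := by positivity
  have h1 : K^3/6 ≤ Real.exp K := by
    have h := Real.sum_le_exp_of_nonneg hK0 4
    have hsum : ∑ i ∈ Finset.range 4, K ^ i / i.factorial
        = 1 + K + K^2/2 + K^3/6 := by
      rw [Finset.sum_range_succ, Finset.sum_range_succ, Finset.sum_range_succ,
        Finset.sum_range_succ]
      norm_num [Nat.factorial]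
    rw [hsum] at h
    nlinarith [sq_nonneg K]
  have h2 : (3:ℝ) ≤ Real.exp (Real.sqrt 2 * Real.exp K) := by
    have he1 : (1:ℝ) ≤ Real.exp K := by
      rw [← Real.exp_zero]
      exact Real.exp_le_exp.mpr hK0
    have harg : Real.sqrt 2 ≤ Real.sqrt 2 * Real.exp K := by nlinarith
    have h3 : (3:ℝ) ≤ Real.exp (Real.sqrt 2) := by
      have h := Real.sum_le_exp_of_nonneg hs2pos.le 3
      have hsum : ∑ i ∈ Finset.range 3, Real.sqrt 2 ^ i / i.factorial
          = 1 + Real.sqrt 2 + Real.sqrt 2^2/2 := by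
        rw [Finset.sum_range_succ, Finset.sum_range_succ, Finset.sum_range_succ]
        norm_num [Nat.factorial]
      rw [hsum, hs22] at h
      linarith
    exact h3.trans (Real.exp_le_exp.mpr harg)
  rw [Real.exp_add]
  have hle : (K^3/6) * 3 ≤ Real.exp K * Real.exp (Real.sqrt 2 * Real.exp K) := by
    have h6 : 0 ≤ K^3/6 := by positivity
    exact mul_le_mul h1 h2 (by norm_num) (Real.exp_nonneg _)
  have hKc : K^3 = 2 * Real.sqrt 2 * V^3 := by
    rw [hK]
    have : (Real.sqrt 2 * V)^3 = Real.sqrt 2^2 * Real.sqrt 2 * V^3 := by ring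
    rw [this, hs22]
  nlinarith [hle, hKc]

/-! ### Vector lemmas -/

lemma aux_norm3_nonneg (a : Fin 3 → ℝ) : 0 ≤ norm3 a := Real.sqrt_nonneg _

lemma aux_norm3_sq (a : Fin 3 → ℝ) : norm3 a ^ 2 = ∑ i, a i ^ 2 :=
  Real.sq_sqrt (by positivity)

lemma aux_norm3_eq_zero {a : Fin 3 → ℝ} (h : norm3 a = 0) : a = 0 := by
  have h2 : ∑ i, a i ^ 2 = 0 := by
    have := aux_norm3_sq a
    rw [h] at this
    simpa using this.symm
  funext i
  have := (Finset.sum_eq_zero_iff_of_nonneg (fun j _ => sq_nonneg (a j))).mp h2 i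
    (Finset.mem_univ i)
  have := sq_eq_zero_iff.mp this
  simpa using this

lemma aux_norm3_smul (r : ℝ) (hr : 0 ≤ r) (a : Fin 3 → ℝ) : norm3 (r • a) = r * norm3 a := by
  unfold norm3
  have he : ∑ i, (r • a) i ^ 2 = r^2 * ∑ i, a i ^ 2 := by
    simp [Finset.mul_sum, mul_pow]
  rw [he, Real.sqrt_mul (sq_nonneg r), Real.sqrt_sq hr]

lemma aux_dot3_smul (r : ℝ) (a b : Fin 3 → ℝ) : dot3 (r • a) b = r * dot3 a b := by
  unfold dot3
  simp [Finset.mul_sum]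
  ring_nf

lemma aux_dot3_zero (b : Fin 3 → ℝ) : dot3 0 b = 0 := by simp [dot3]

lemma aux_abs_dot3_le (a b : Fin 3 → ℝ) : |dot3 a b| ≤ norm3 a * norm3 b := by
  have h := Finset.sum_mul_sq_le_sq_mul_sq (Finset.univ) a b
  have h2 : dot3 a b ^ 2 ≤ (norm3 a * norm3 b)^2 := by
    rw [mul_pow, aux_norm3_sq, aux_norm3_sq]
    exact h
  have h3 : 0 ≤ norm3 a * norm3 b := mul_nonneg (aux_norm3_nonneg a) (aux_norm3_nonneg b)
  exact abs_le_of_sq_le_sq' h2 h3 |>.2 |> fun h => abs_le.mpr ⟨(abs_le_of_sq_le_sq' h2 h3).1, h⟩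

lemma aux_tilde_sq (u v : Fin 3 → ℝ) (hu : norm3 u = 1) :
    norm3 (tilde3 u v) ^ 2 = norm3 v ^ 2 - dot3 v u ^ 2 := by
  have hu2 : ∑ i, u i ^ 2 = 1 := by
    have := aux_norm3_sq u
    rw [hu] at this
    simpa using this.symm
  rw [aux_norm3_sq, aux_norm3_sq]
  unfold tilde3 dot3
  simp only [Pi.sub_apply, Pi.smul_apply, smul_eq_mul]
  rw [Fin.sum_univ_three, Fin.sum_univ_three, Fin.sum_univ_three]
  rw [Fin.sum_univ_three] at hu2
  linear_combination ((v 0 * u 0 + v 1 * u 1 + v 2 * u 2)^2) * hu2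

/-! ### Operator lemmas -/

lemma aux_sdotC_zero (S : Fin 3 → H →L[ℂ] H) : sdotC 0 S = 0 := by simp [sdotC]

lemma aux_sdotC_smul (r : ℝ) (a : Fin 3 → ℝ) (S : Fin 3 → H →L[ℂ] H) :
    sdotC (r • a) S = (r : ℂ) • sdotC a S := by
  unfold sdotC
  rw [Finset.smul_sum]
  congr 1
  funext i
  simp only [Pi.smul_apply, smul_eq_mul, smul_smul]
  norm_cast

lemma aux_exp_smul_one (c : ℂ) :
    NormedSpace.exp (c • (1 : H →L[ℂ] H)) = Complex.exp c • 1 := by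
  rw [← Algebra.algebraMap_eq_smul_one, ← NormedSpace.algebraMap_exp_comm,
    Complex.exp_eq_exp_ℂ, Algebra.algebraMap_eq_smul_one]

lemma aux_exp_add_scalar (T : H →L[ℂ] H) (c : ℂ) :
    NormedSpace.exp (T + c • 1) = Complex.exp c • NormedSpace.exp T := by
  let +nondep : NormedAlgebra ℚ (H →L[ℂ] H) := .restrictScalars ℚ ℂ _
  have hcomm : Commute T (c • (1 : H →L[ℂ] H)) := by
    unfold Commute SemiconjBy
    simp [mul_smul_comm, smul_mul_assoc]
  rw [NormedSpace.exp_add_of_commute hcomm, aux_exp_smul_one]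
  rw [mul_smul_comm, mul_one]

/-- One-variable central limit bound for the fluctuation operator `F_J(v)` in a
product of spin-`J` coherent states:
`|ω(e^{iF_J(v)}) − e^{−(1/2)|ṽ|₂²}| ≤ J^{−1/2} exp(√2|v|₂ + √2 exp(√2|v|₂))`. -/
theorem stmt2
    (mJ : ℕ) (hmJ : 0 < mJ) (J : ℝ) (hJ : 2 * J = mJ)
    (S : L → Fin 3 → H →L[ℂ] H) (hsa : ∀ x i, IsSelfAdjoint (S x i))
    (hSnorm : ∀ (x : L) (a : Fin 3 → ℝ), ‖sdotC a (S x)‖ = J * norm3 a)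
    (u : L → Fin 3 → ℝ) (hu : ∀ x, norm3 (u x) = 1)
    (Ω : H) (hΩ : ‖Ω‖ = 1)
    (hchar : ∀ w : L → Fin 3 → ℝ, Summable (fun x => norm3 (w x)) →
      (inner ℂ Ω ((NormedSpace.exp (Complex.I • ∑' x, sdotC (w x) (S x))) Ω) : ℂ)
        = ∏' x, (Complex.cos (norm3 (w x) / 2)
            + Complex.I * ((dot3 (w x) (u x) : ℝ) / norm3 (w x))
              * Complex.sin (norm3 (w x) / 2)) ^ mJ)
    (v : L → Fin 3 → ℝ) (hv2 : Summable fun x => norm3 (v x) ^ 2)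
    (hFsum : Summable fun x =>
      sdotC (v x) (S x) - ((J * dot3 (v x) (u x) : ℝ) : ℂ) • (1 : H →L[ℂ] H)) :
    ‖(inner ℂ Ω ((NormedSpace.exp (Complex.I • flucOp J S u v)) Ω) : ℂ)
          - Complex.exp (-(1 / 2 : ℂ) * ((∑' x, norm3 (tilde3 (u x) (v x)) ^ 2 : ℝ) : ℂ))‖
      ≤ (1 / Real.sqrt J) *
          Real.exp (Real.sqrt 2 * Real.sqrt (∑' x, norm3 (v x) ^ 2)
            + Real.sqrt 2 * Real.exp (Real.sqrt 2 * Real.sqrt (∑' x, norm3 (v x) ^ 2))) := by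
  classical
  have hm1 : (1:ℝ) ≤ mJ := by exact_mod_cast hmJ
  have hJpos : 0 < J := by nlinarith
  have hsJ : 0 < Real.sqrt J := Real.sqrt_pos.mpr hJpos
  have hsJ2 : Real.sqrt J ^ 2 = J := Real.sq_sqrt hJpos.le
  have hs22 : Real.sqrt 2 ^ 2 = 2 := Real.sq_sqrt (by norm_num)
  have hs2pos : (0:ℝ) < Real.sqrt 2 := Real.sqrt_pos.mpr (by norm_num)
  have h2Jpos : (0:ℝ) < 2*J := by nlinarith
  have hs2J : 0 < Real.sqrt (2*J) := Real.sqrt_pos.mpr h2Jpos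
  have hs2J2 : Real.sqrt (2*J)^2 = 2*J := Real.sq_sqrt h2Jpos.le
  have hsplit2J : Real.sqrt (2*J) = Real.sqrt 2 * Real.sqrt J := Real.sqrt_mul (by norm_num) J
  have hεval : Real.sqrt (2/J) = Real.sqrt 2 / Real.sqrt J := Real.sqrt_div (by norm_num) J
  have hεpos : 0 < Real.sqrt (2/J) := Real.sqrt_pos.mpr (by positivity)
  -- abbreviations (as plain defs so they stay syntactically visible)
  -- c x := dot3 (v x) (u x) / norm3 (v x)
  have hvzero : ∀ x : L, norm3 (v x) = 0 → dot3 (v x) (u x) = 0 := by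
    intro x hx
    rw [aux_norm3_eq_zero hx, aux_dot3_zero]
  have hcabs : ∀ x : L, |dot3 (v x) (u x) / norm3 (v x)| ≤ 1 := by
    intro x
    rcases eq_or_lt_of_le (aux_norm3_nonneg (v x)) with h0 | h0
    · rw [hvzero x h0.symm]
      simp
    · rw [abs_div, abs_of_pos h0, div_le_one h0]
      calc |dot3 (v x) (u x)| ≤ norm3 (v x) * norm3 (u x) := aux_abs_dot3_le _ _
      _ = norm3 (v x) := by rw [hu x, mul_one]
  have htilde : ∀ x : L, norm3 (tilde3 (u x) (v x))^2
      = (1 - (dot3 (v x) (u x) / norm3 (v x))^2) * norm3 (v x)^2 := by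
    intro x
    rw [aux_tilde_sq (u x) (v x) (hu x)]
    rcases eq_or_lt_of_le (aux_norm3_nonneg (v x)) with h0 | h0
    · rw [← h0, hvzero x h0.symm]
      ring
    · field_simp
  -- per-site θ identity
  have hθeq : ∀ x : L, Real.sqrt (2/J) * norm3 (v x) / 2 = norm3 (v x) / Real.sqrt (2*J) := by
    intro x
    rw [hεval, hsplit2J]
    rw [div_mul_eq_mul_div, div_div, div_eq_div_iff (by positivity) (by positivity)]
    linear_combination (norm3 (v x) * Real.sqrt J) * hs22
  -- phase identity
  have hphase : ∀ x : L, Real.sqrt (2/J) * (J * dot3 (v x) (u x))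
      = (mJ:ℝ) * ((dot3 (v x) (u x) / norm3 (v x)) * (norm3 (v x) / Real.sqrt (2*J))) := by
    intro x
    rcases eq_or_lt_of_le (aux_norm3_nonneg (v x)) with h0 | h0
    · rw [hvzero x h0.symm]
      ring
    · rw [hεval, hsplit2J, ← hJ]
      field_simp
      linear_combination (dot3 (v x) (u x)) * hs22
  -- the finite-volume characteristic function
  have hstep : ∀ E : Finset L,
      (inner ℂ Ω ((NormedSpace.exp ((Complex.I * (Real.sqrt (2/J) : ℂ)) •
          ∑ x ∈ E, (sdotC (v x) (S x) - ((J * dot3 (v x) (u x) : ℝ) : ℂ) • 1))) Ω) : ℂ)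
        = ∏ x ∈ E, (Complex.exp (-(Complex.I * ((dot3 (v x) (u x) / norm3 (v x) : ℝ) : ℂ)
              * ((norm3 (v x) / Real.sqrt (2*J) : ℝ) : ℂ))) *
            (((Real.cos (norm3 (v x) / Real.sqrt (2*J)) : ℝ) : ℂ)
              + Complex.I * ((dot3 (v x) (u x) / norm3 (v x) : ℝ) : ℂ)
                * ((Real.sin (norm3 (v x) / Real.sqrt (2*J)) : ℝ) : ℂ)))^mJ := by
    intro E
    set w : L → Fin 3 → ℝ := fun x => if x ∈ E then Real.sqrt (2/J) • v x else 0 with hw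
    have hwoff : ∀ x ∉ E, sdotC (w x) (S x) = 0 := by
      intro x hx
      rw [hw]
      simp only [if_neg hx]
      exact aux_sdotC_zero _
    have hwsum : Summable (fun x => norm3 (w x)) := by
      apply summable_of_ne_finset_zero (s := E)
      intro x hx
      rw [hw]
      simp only [if_neg hx]
      simp [norm3]
    have hts : (∑' x, sdotC (w x) (S x))
        = (Real.sqrt (2/J) : ℂ) • ∑ x ∈ E, sdotC (v x) (S x) := by
      rw [tsum_eq_sum (fun x hx => hwoff x hx), Finset.smul_sum]
      apply Finset.sum_congr rfl
      intro x hx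
      rw [hw]
      simp only [if_pos hx]
      exact aux_sdotC_smul _ (v x) (S x)
    have hAsum : (∑ x ∈ E, (sdotC (v x) (S x) - ((J * dot3 (v x) (u x) : ℝ) : ℂ) • 1))
        = (∑ x ∈ E, sdotC (v x) (S x))
          - (((∑ x ∈ E, J * dot3 (v x) (u x) : ℝ)) : ℂ) • (1 : H →L[ℂ] H) := by
      rw [Finset.sum_sub_distrib]
      congr 1
      rw [← Finset.sum_smul]
      congr 1
      push_cast
      ring
    have hsplitop : (Complex.I * (Real.sqrt (2/J) : ℂ)) •
          ∑ x ∈ E, (sdotC (v x) (S x) - ((J * dot3 (v x) (u x) : ℝ) : ℂ) • 1)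
        = (Complex.I • ∑' x, sdotC (w x) (S x))
          + (-(Complex.I * (Real.sqrt (2/J) : ℂ)
              * (((∑ x ∈ E, J * dot3 (v x) (u x) : ℝ)) : ℂ))) • (1 : H →L[ℂ] H) := by
      rw [hAsum, hts, smul_sub, smul_smul, smul_smul, sub_eq_add_neg, ← neg_smul]
    rw [hsplitop, aux_exp_add_scalar, ContinuousLinearMap.smul_apply, inner_smul_right,
      hchar w hwsum]
    -- reduce the tprod to a finite product
    have hoff : ∀ x ∉ E, (Complex.cos ((norm3 (w x) : ℝ) / 2)
        + Complex.I * (((dot3 (w x) (u x) : ℝ)) / ((norm3 (w x) : ℝ)))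
          * Complex.sin (((norm3 (w x) : ℝ)) / 2)) ^ mJ = 1 := by
      intro x hx
      rw [hw]
      simp only [if_neg hx]
      rw [show norm3 (0 : Fin 3 → ℝ) = 0 by simp [norm3], aux_dot3_zero]
      simp
    rw [tprod_eq_prod hoff]
    -- identify each factor
    have hfac : ∀ x ∈ E, (Complex.cos ((norm3 (w x) : ℝ) / 2)
        + Complex.I * (((dot3 (w x) (u x) : ℝ)) / ((norm3 (w x) : ℝ)))
          * Complex.sin (((norm3 (w x) : ℝ)) / 2)) ^ mJ
        = (((Real.cos (norm3 (v x) / Real.sqrt (2*J)) : ℝ) : ℂ)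
            + Complex.I * ((dot3 (v x) (u x) / norm3 (v x) : ℝ) : ℂ)
              * ((Real.sin (norm3 (v x) / Real.sqrt (2*J)) : ℝ) : ℂ))^mJ := by
      intro x hx
      have hwx : w x = Real.sqrt (2/J) • v x := by rw [hw]; simp only [if_pos hx]
      have hnw : norm3 (w x) = Real.sqrt (2/J) * norm3 (v x) := by
        rw [hwx]; exact aux_norm3_smul _ hεpos.le _
      have hdw : dot3 (w x) (u x) = Real.sqrt (2/J) * dot3 (v x) (u x) := by
        rw [hwx]; exact aux_dot3_smul _ _ _
      congr 1
      have harg : ((norm3 (w x) : ℝ) : ℂ) / 2 = ((norm3 (v x) / Real.sqrt (2*J) : ℝ) : ℂ) := by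
        rw [hnw, ← hθeq x]
        push_cast
        ring
      have hratio : (((dot3 (w x) (u x) : ℝ)) : ℂ) / ((norm3 (w x) : ℝ))
          = ((dot3 (v x) (u x) / norm3 (v x) : ℝ) : ℂ) := by
        rw [hnw, hdw, ← Complex.ofReal_div]
        congr 1
        rw [mul_div_mul_left _ _ hεpos.ne']
      rw [harg, hratio, ← Complex.ofReal_cos, ← Complex.ofReal_sin]
    rw [Finset.prod_congr rfl hfac]
    -- phase factor
    have hargs : (-(Complex.I * (Real.sqrt (2/J) : ℂ)
          * (((∑ x ∈ E, J * dot3 (v x) (u x) : ℝ)) : ℂ)))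
        = ∑ x ∈ E, (mJ : ℂ) * (-(Complex.I * ((dot3 (v x) (u x) / norm3 (v x) : ℝ) : ℂ)
            * ((norm3 (v x) / Real.sqrt (2*J) : ℝ) : ℂ))) := by
      have hreal : Real.sqrt (2/J) * (∑ x ∈ E, J * dot3 (v x) (u x))
          = ∑ x ∈ E, (mJ:ℝ) * ((dot3 (v x) (u x) / norm3 (v x))
              * (norm3 (v x) / Real.sqrt (2*J))) := by
        rw [Finset.mul_sum]
        exact Finset.sum_congr rfl (fun x _ => hphase x)
      calc -(Complex.I * (Real.sqrt (2/J) : ℂ) * (((∑ x ∈ E, J * dot3 (v x) (u x) : ℝ)) : ℂ))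
          = -(Complex.I * ((Real.sqrt (2/J) * (∑ x ∈ E, J * dot3 (v x) (u x)) : ℝ) : ℂ)) := by
            push_cast; ring
        _ = -(Complex.I * ((∑ x ∈ E, (mJ:ℝ) * ((dot3 (v x) (u x) / norm3 (v x))
              * (norm3 (v x) / Real.sqrt (2*J))) : ℝ) : ℂ)) := by rw [hreal]
        _ = ∑ x ∈ E, (mJ : ℂ) * (-(Complex.I * ((dot3 (v x) (u x) / norm3 (v x) : ℝ) : ℂ)
            * ((norm3 (v x) / Real.sqrt (2*J) : ℝ) : ℂ))) := by
            push_cast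
            rw [Finset.mul_sum, ← Finset.sum_neg_distrib]
            apply Finset.sum_congr rfl
            intro x _
            ring
    rw [hargs, Complex.exp_sum, ← Finset.prod_mul_distrib]
    apply Finset.prod_congr rfl
    intro x _
    rw [mul_pow, Complex.exp_nat_mul]
  -- notation for the per-site quantities
  set gt : L → ℂ := fun x => (Complex.exp (-(Complex.I * ((dot3 (v x) (u x) / norm3 (v x) : ℝ) : ℂ)
        * ((norm3 (v x) / Real.sqrt (2*J) : ℝ) : ℂ))) *
      (((Real.cos (norm3 (v x) / Real.sqrt (2*J)) : ℝ) : ℂ)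
        + Complex.I * ((dot3 (v x) (u x) / norm3 (v x) : ℝ) : ℂ)
          * ((Real.sin (norm3 (v x) / Real.sqrt (2*J)) : ℝ) : ℂ)))^mJ with hgt
  set bt : L → ℂ := fun x => ((Real.exp (-((1 - (dot3 (v x) (u x) / norm3 (v x))^2)
      * norm3 (v x)^2 / 2)) : ℝ) : ℂ) with hbt
  have hsite : ∀ x : L, ‖gt x - bt x‖
      ≤ Real.sqrt 2 * norm3 (v x)^3 / Real.sqrt J := by
    intro x
    exact aux_site_n mJ hmJ J (norm3 (v x)) (dot3 (v x) (u x) / norm3 (v x)) hJ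
      (aux_norm3_nonneg _) (hcabs x)
  have hgabs : ∀ x : L, ‖gt x‖ ≤ 1 := by
    intro x
    rw [hgt]
    simp only [norm_pow, norm_mul]
    have hre : ∀ a b : ℝ, (-(Complex.I * (a:ℂ) * (b:ℂ))).re = 0 := by
      intro a b
      simp
    have h1 : ‖Complex.exp (-(Complex.I
        * ((dot3 (v x) (u x) / norm3 (v x) : ℝ) : ℂ)
        * ((norm3 (v x) / Real.sqrt (2*J) : ℝ) : ℂ)))‖ = 1 := by
      rw [Complex.norm_exp, hre, Real.exp_zero]
    rw [h1, one_mul]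
    exact pow_le_one₀ (norm_nonneg _) (aux_abs_cs _ _ (hcabs x))
  have hcsq : ∀ x : L, (dot3 (v x) (u x) / norm3 (v x))^2 ≤ 1 := by
    intro x
    rw [← sq_abs]
    nlinarith [abs_nonneg (dot3 (v x) (u x) / norm3 (v x)), hcabs x]
  have hbabs : ∀ x : L, ‖bt x‖ ≤ 1 := by
    intro x
    rw [hbt]
    rw [Complex.norm_real, Real.norm_eq_abs, abs_of_nonneg (Real.exp_nonneg _), Real.exp_le_one_iff]
    nlinarith [sq_nonneg (norm3 (v x)), hcsq x]
  -- the ℓ² norm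
  have htsum0 : 0 ≤ ∑' x, norm3 (v x)^2 := tsum_nonneg (fun x => sq_nonneg _)
  have hV0 : 0 ≤ Real.sqrt (∑' x, norm3 (v x)^2) := Real.sqrt_nonneg _
  have hV2 : Real.sqrt (∑' x, norm3 (v x)^2)^2 = ∑' x, norm3 (v x)^2 := Real.sq_sqrt htsum0
  have hnleV : ∀ x : L, norm3 (v x) ≤ Real.sqrt (∑' x, norm3 (v x)^2) := by
    intro x
    have h1 : norm3 (v x)^2 ≤ ∑' x, norm3 (v x)^2 :=
      hv2.le_tsum x (fun _ _ => sq_nonneg _)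
    calc norm3 (v x) = Real.sqrt (norm3 (v x)^2) := (Real.sqrt_sq (aux_norm3_nonneg _)).symm
    _ ≤ Real.sqrt (∑' x, norm3 (v x)^2) := Real.sqrt_le_sqrt h1
  -- finite-volume bound
  have hEbound : ∀ E : Finset L, ‖(∏ x ∈ E, gt x) - ∏ x ∈ E, bt x‖
      ≤ (1 / Real.sqrt J) *
          Real.exp (Real.sqrt 2 * Real.sqrt (∑' x, norm3 (v x) ^ 2)
            + Real.sqrt 2 * Real.exp (Real.sqrt 2 * Real.sqrt (∑' x, norm3 (v x) ^ 2))) := by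
    intro E
    refine (aux_prod_diff E gt bt (fun x _ => hgabs x) (fun x _ => hbabs x)).trans ?_
    have h1 : ∑ x ∈ E, ‖gt x - bt x‖
        ≤ ∑ x ∈ E, Real.sqrt 2 * norm3 (v x)^3 / Real.sqrt J :=
      Finset.sum_le_sum (fun x _ => hsite x)
    refine h1.trans ?_
    have h2 : ∑ x ∈ E, Real.sqrt 2 * norm3 (v x)^3 / Real.sqrt J
        = (∑ x ∈ E, norm3 (v x)^3) * (Real.sqrt 2 / Real.sqrt J) := by
      rw [Finset.sum_mul]
      apply Finset.sum_congr rfl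
      intro x _
      ring
    rw [h2]
    have h3 : ∑ x ∈ E, norm3 (v x)^3
        ≤ Real.sqrt (∑' x, norm3 (v x)^2)^3 := by
      have h4 : ∑ x ∈ E, norm3 (v x)^3
          ≤ ∑ x ∈ E, Real.sqrt (∑' x, norm3 (v x)^2) * norm3 (v x)^2 := by
        apply Finset.sum_le_sum
        intro x _
        have : norm3 (v x)^3 = norm3 (v x) * norm3 (v x)^2 := by ring
        rw [this]
        exact mul_le_mul_of_nonneg_right (hnleV x) (sq_nonneg _)
      refine h4.trans ?_
      rw [← Finset.mul_sum]
      have h5 : ∑ x ∈ E, norm3 (v x)^2 ≤ ∑' x, norm3 (v x)^2 :=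
        hv2.sum_le_tsum E (fun x _ => sq_nonneg _)
      calc Real.sqrt (∑' x, norm3 (v x)^2) * ∑ x ∈ E, norm3 (v x)^2
          ≤ Real.sqrt (∑' x, norm3 (v x)^2) * ∑' x, norm3 (v x)^2 :=
            mul_le_mul_of_nonneg_left h5 hV0
        _ = Real.sqrt (∑' x, norm3 (v x)^2)^3 := by
            rw [show (Real.sqrt (∑' x, norm3 (v x)^2))^3
              = Real.sqrt (∑' x, norm3 (v x)^2) * (Real.sqrt (∑' x, norm3 (v x)^2)
                * Real.sqrt (∑' x, norm3 (v x)^2)) from by ring,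
              Real.mul_self_sqrt htsum0]
    have h6 : (∑ x ∈ E, norm3 (v x)^3) * (Real.sqrt 2 / Real.sqrt J)
        ≤ Real.sqrt (∑' x, norm3 (v x)^2)^3 * (Real.sqrt 2 / Real.sqrt J) :=
      mul_le_mul_of_nonneg_right h3 (by positivity)
    refine h6.trans ?_
    have h7 := aux_cube_bound (Real.sqrt (∑' x, norm3 (v x)^2)) hV0
    calc Real.sqrt (∑' x, norm3 (v x)^2)^3 * (Real.sqrt 2 / Real.sqrt J)
        = (Real.sqrt 2 * Real.sqrt (∑' x, norm3 (v x)^2)^3) * (1 / Real.sqrt J) := by ring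
      _ ≤ Real.exp (Real.sqrt 2 * Real.sqrt (∑' x, norm3 (v x) ^ 2)
            + Real.sqrt 2 * Real.exp (Real.sqrt 2 * Real.sqrt (∑' x, norm3 (v x) ^ 2)))
          * (1 / Real.sqrt J) :=
            mul_le_mul_of_nonneg_right h7 (by positivity)
      _ = (1 / Real.sqrt J) *
          Real.exp (Real.sqrt 2 * Real.sqrt (∑' x, norm3 (v x) ^ 2)
            + Real.sqrt 2 * Real.exp (Real.sqrt 2 * Real.sqrt (∑' x, norm3 (v x) ^ 2))) := by
            ring
  -- limit of the finite-volume characteristic functions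
  have hfluc : Complex.I • flucOp J S u v
      = (Complex.I * (Real.sqrt (2/J) : ℂ)) •
          ∑' x, (sdotC (v x) (S x) - ((J * dot3 (v x) (u x) : ℝ) : ℂ) • 1) := by
    rw [flucOp, smul_smul]
  have hcont : Continuous (fun T : H →L[ℂ] H =>
      (inner ℂ Ω ((NormedSpace.exp ((Complex.I * (Real.sqrt (2/J) : ℂ)) • T)) Ω) : ℂ)) := by
    let +nondep : NormedAlgebra ℚ (H →L[ℂ] H) := .restrictScalars ℚ ℂ _
    apply Continuous.inner continuous_const
    exact (ContinuousLinearMap.apply ℂ H Ω).continuous.comp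
      (NormedSpace.exp_continuous.comp (continuous_const_smul _))
  have hGlim : Filter.Tendsto (fun E : Finset L => ∏ x ∈ E, gt x) Filter.atTop
      (nhds ((inner ℂ Ω ((NormedSpace.exp (Complex.I • flucOp J S u v)) Ω) : ℂ))) := by
    rw [hfluc]
    have h := (hcont.tendsto _).comp hFsum.hasSum
    exact h.congr hstep
  -- limit of the gaussian products
  have hsum_t : Summable (fun x => (1 - (dot3 (v x) (u x) / norm3 (v x))^2)
      * norm3 (v x)^2) := by
    refine Summable.of_nonneg_of_le (fun x => ?_) (fun x => ?_) hv2
    · have := hcsq x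
      nlinarith [sq_nonneg (norm3 (v x))]
    · have := hcsq x
      nlinarith [sq_nonneg (norm3 (v x)),
        sq_nonneg (dot3 (v x) (u x) / norm3 (v x) * norm3 (v x))]
  have htsum_eq : ∑' x, norm3 (tilde3 (u x) (v x))^2
      = ∑' x, (1 - (dot3 (v x) (u x) / norm3 (v x))^2) * norm3 (v x)^2 :=
    tsum_congr htilde
  have hYlim : Filter.Tendsto (fun E : Finset L => ∏ x ∈ E, bt x) Filter.atTop
      (nhds (Complex.exp (-(1 / 2 : ℂ)
        * ((∑' x, norm3 (tilde3 (u x) (v x)) ^ 2 : ℝ) : ℂ)))) := by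
    have hφ : Continuous (fun s : ℝ => ((Real.exp (-(s/2)) : ℝ) : ℂ)) := by
      apply Complex.continuous_ofReal.comp
      apply Real.continuous_exp.comp
      exact (continuous_id.div_const 2).neg
    have h := (hφ.tendsto _).comp hsum_t.hasSum
    have hprod : ∀ E : Finset L, ((Real.exp (-((∑ x ∈ E,
        (1 - (dot3 (v x) (u x) / norm3 (v x))^2) * norm3 (v x)^2)/2)) : ℝ) : ℂ)
        = ∏ x ∈ E, bt x := by
      intro E
      rw [hbt, ← Complex.ofReal_prod]
      congr 1
      rw [← Real.exp_sum]
      congr 1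
      rw [Finset.sum_neg_distrib, Finset.sum_div]
    have hval : ((Real.exp (-((∑' x,
        (1 - (dot3 (v x) (u x) / norm3 (v x))^2) * norm3 (v x)^2)/2)) : ℝ) : ℂ)
        = Complex.exp (-(1 / 2 : ℂ) * ((∑' x, norm3 (tilde3 (u x) (v x)) ^ 2 : ℝ) : ℂ)) := by
      rw [htsum_eq, Complex.ofReal_exp]
      congr 1
      push_cast
      ring
    rw [← hval]
    exact h.congr hprod
  -- conclude
  have habslim : Filter.Tendsto (fun E : Finset L =>
      ‖(∏ x ∈ E, gt x) - ∏ x ∈ E, bt x‖) Filter.atTop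
      (nhds (‖(inner ℂ Ω ((NormedSpace.exp (Complex.I • flucOp J S u v)) Ω) : ℂ)
          - Complex.exp (-(1 / 2 : ℂ)
            * ((∑' x, norm3 (tilde3 (u x) (v x)) ^ 2 : ℝ) : ℂ))‖)) :=
    (continuous_norm.tendsto _).comp (hGlim.sub hYlim)
  exact le_of_tendsto habslim (Filter.Eventually.of_forall hEbound)
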